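/- Let Ω⊆R^n be open and F : Ω × (R^N⊗S(n)) → R^N a Carathéodory map satisfying Definition-1 ellipticity with rank-one positive A, λ>κ>0, and weight α (α, 1/α ∈ L^∞, α>0 a.e.), and suppose F(x,·) is Lipschitz with constant M uniformly in x. Then for all sufficiently large σ>0, F satisfies the K-condition with the same A, weight α'(x)=α(x)/(λσ), and constants β = (2/σ)(κ/λ + (1/(2σ))(M‖α‖_∞/(λν(A)))²), γ = 1 − 2/σ, which satisfy β+γ<1. -/

import Mathlib

open Finset MeasureTheory

set_option maxHeartbeats 1000000

/-- Tensors in `ℝ^N ⊗ ℝ^{n×n}` (hessian-type arguments). -/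
abbrev Tens (N n : ℕ) := Fin N → Fin n → Fin n → ℝ

/-- The contraction `A:Z ∈ ℝ^N`, `(A:Z)_α = A_{αβij} Z_{βij}`. -/
def contA {N n : ℕ} (A : Fin N → Fin N → Fin n → Fin n → ℝ) (Z : Tens N n) : Fin N → ℝ :=
  fun α => ∑ β, ∑ i, ∑ j, A α β i j * Z β i j

/-- Squared Euclidean norm on `ℝ^N`. -/
def vnorm2 {N : ℕ} (v : Fin N → ℝ) : ℝ := ∑ α, (v α) ^ 2

/-- Squared Frobenius norm on tensors. -/
def tnorm2 {N n : ℕ} (Z : Tens N n) : ℝ := ∑ α, ∑ i, ∑ j, (Z α i j) ^ 2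

/-- Definition 1 ellipticity + Lipschitz ⇒ K-condition: if `F` satisfies
Definition 1 ellipticity with data `(A, ν(A), λ > κ > 0, α)` and `F(x,·)` is `M`-Lipschitz
uniformly in `x`, then for all sufficiently large `σ`, `F` satisfies the K-condition with
weight `α/(λσ)` and constants `β(σ) = (2/σ)(κ/λ + (1/(2σ))(M‖α‖_∞/(λν(A)))²)`,
`γ(σ) = 1 − 2/σ`, which satisfy `β(σ) + γ(σ) < 1`. -/
theorem stmt7 {n N : ℕ} (Ω : Set (Fin n → ℝ)) (hΩ : IsOpen Ω)
    (F : (Fin n → ℝ) → Tens N n → Fin N → ℝ)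
    (hFmeas : ∀ X : Tens N n, Measurable fun x => F x X)
    (hFcont : ∀ᵐ x ∂(volume.restrict Ω), Continuous fun X => F x X)
    (A : Fin N → Fin N → Fin n → Fin n → ℝ)
    (hsymm : ∀ α β i j, A α β i j = A β α j i) (ν : ℝ) (hν : 0 < ν)
    (hrank1 : ∀ (η : Fin N → ℝ) (a : Fin n → ℝ),
      ∑ α, ∑ β, ∑ i, ∑ j, A α β i j * η α * a i * η β * a j ≥
        ν * (∑ α, (η α) ^ 2) * (∑ i, (a i) ^ 2))
    (lam kap : ℝ) (hkap : 0 < kap) (hlk : kap < lam)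
    (al : (Fin n → ℝ) → ℝ)
    (hal : MemLp al ⊤ (volume.restrict Ω))
    (halpos : ∀ᵐ x ∂(volume.restrict Ω), 0 < al x)
    (halinv : MemLp (fun x => (al x)⁻¹) ⊤ (volume.restrict Ω))
    (hellip : ∀ᵐ x ∂(volume.restrict Ω), ∀ X Z : Tens N n,
      ∑ γ, contA A Z γ * (F x (X + Z) γ - F x X γ) ≥
        lam / al x * vnorm2 (contA A Z) - kap / al x * ν ^ 2 * tnorm2 Z)
    (M : ℝ) (hM : 0 < M)
    (hLip : ∀ᵐ x ∂(volume.restrict Ω), ∀ X Y : Tens N n,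
      Real.sqrt (vnorm2 (fun γ => F x Y γ - F x X γ)) ≤ M * Real.sqrt (tnorm2 (Y - X))) :
    ∃ σ₀ : ℝ, 0 < σ₀ ∧ ∀ σ : ℝ, σ₀ ≤ σ →
      ((2 / σ) * (kap / lam +
          (1 / (2 * σ)) * (M * (eLpNorm al ⊤ (volume.restrict Ω)).toReal / (lam * ν)) ^ 2)
        + (1 - 2 / σ) < 1) ∧
      (∀ᵐ x ∂(volume.restrict Ω), ∀ X Z : Tens N n,
        vnorm2 (fun γ => contA A Z γ - (al x / (lam * σ)) * (F x (X + Z) γ - F x X γ)) ≤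
          ((2 / σ) * (kap / lam +
            (1 / (2 * σ)) * (M * (eLpNorm al ⊤ (volume.restrict Ω)).toReal / (lam * ν)) ^ 2))
              * ν ^ 2 * tnorm2 Z
            + (1 - 2 / σ) * vnorm2 (contA A Z)) := by
  classical
  set μ := volume.restrict Ω with hμ
  set C : ℝ := (eLpNorm al ⊤ μ).toReal with hC
  have hlam : 0 < lam := hkap.trans hlk
  have hCnn : 0 ≤ C := ENNReal.toReal_nonneg
  set K : ℝ := (M * C / (lam * ν)) ^ 2 with hK
  have hKnn : 0 ≤ K := sq_nonneg _
  have hr : kap / lam < 1 := (div_lt_one hlam).2 hlk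
  have hδ : 0 < 1 - kap / lam := by linarith
  have h2δ : 0 < 2 * (1 - kap / lam) := by linarith
  -- a.e. bound on al by C
  have halC : ∀ᵐ x ∂μ, al x ≤ C := by
    have h1 : ∀ᵐ x ∂μ, (‖al x‖₊ : ENNReal) ≤ eLpNormEssSup al μ :=
      ae_le_eLpNormEssSup
    have h2 : eLpNorm al ⊤ μ = eLpNormEssSup al μ := eLpNorm_exponent_top
    have h3 : eLpNormEssSup al μ ≠ ⊤ := by
      rw [← h2]; exact hal.eLpNorm_lt_top.ne
    filter_upwards [h1] with x hx
    have h4 := ENNReal.toReal_mono h3 hx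
    simp only [ENNReal.coe_toReal, coe_nnnorm, Real.norm_eq_abs] at h4
    calc al x ≤ |al x| := le_abs_self _
      _ ≤ (eLpNormEssSup al μ).toReal := h4
      _ = C := by rw [hC, h2]
  have hσ₀0 : (0:ℝ) < K / (2 * (1 - kap / lam)) + 1 := by
    have : (0:ℝ) ≤ K / (2 * (1 - kap / lam)) := div_nonneg hKnn h2δ.le
    linarith
  refine ⟨K / (2 * (1 - kap / lam)) + 1, hσ₀0, fun σ hσ => ?_⟩
  have hσ1 : (1 : ℝ) ≤ σ := by
    have : (0:ℝ) ≤ K / (2 * (1 - kap / lam)) := div_nonneg hKnn h2δ.le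
    linarith
  have hσ0 : 0 < σ := lt_of_lt_of_le one_pos hσ1
  have hKσ : K / (2 * σ) < 1 - kap / lam := by
    rw [div_lt_iff₀ (by positivity)]
    have hσ' : K ≤ (σ - 1) * (2 * (1 - kap / lam)) := by
      rw [← div_le_iff₀ h2δ]; linarith
    nlinarith
  have hcond : (2 / σ) * (kap / lam + (1 / (2 * σ)) * K) + (1 - 2 / σ) < 1 := by
    have h1 : (1 / (2 * σ)) * K = K / (2 * σ) := by ring
    have h2 : kap / lam + (1 / (2 * σ)) * K < 1 := by rw [h1]; linarith
    have h3 : (2 / σ) * (kap / lam + (1 / (2 * σ)) * K) < (2 / σ) * 1 :=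
      mul_lt_mul_of_pos_left h2 (by positivity)
    linarith
  refine ⟨hcond, ?_⟩
  filter_upwards [halpos, hellip, hLip, halC] with x hx0 hxe hxl hxC
  intro X Z
  have hal0 : al x ≠ 0 := ne_of_gt hx0
  have hlam0 : lam ≠ 0 := ne_of_gt hlam
  have hσ0' : σ ≠ 0 := ne_of_gt hσ0
  have hν0 : ν ≠ 0 := ne_of_gt hν
  set v : Fin N → ℝ := contA A Z with hv
  set w : Fin N → ℝ := fun γ => F x (X + Z) γ - F x X γ with hw
  set t : ℝ := al x / (lam * σ) with ht
  have htnn : 0 ≤ t := by rw [ht]; positivity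
  have htle : t ≤ C / (lam * σ) := by
    rw [ht]
    exact div_le_div_of_nonneg_right hxC (by positivity)
  have hZnn : 0 ≤ tnorm2 Z :=
    Finset.sum_nonneg fun _ _ => Finset.sum_nonneg fun _ _ =>
      Finset.sum_nonneg fun _ _ => sq_nonneg _
  have hwnn : 0 ≤ vnorm2 w := Finset.sum_nonneg fun _ _ => sq_nonneg _
  -- expansion
  have key1 : vnorm2 (fun γ => v γ - t * w γ)
      = vnorm2 v - 2 * t * (∑ γ, v γ * w γ) + t ^ 2 * vnorm2 w := by
    simp only [vnorm2, Finset.mul_sum, ← Finset.sum_sub_distrib, ← Finset.sum_add_distrib]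
    exact Finset.sum_congr rfl fun γ _ => by ring
  -- ellipticity bound
  have key2 : lam / al x * vnorm2 v - kap / al x * ν ^ 2 * tnorm2 Z ≤ ∑ γ, v γ * w γ :=
    hxe X Z
  -- Lipschitz bound
  have key3 : vnorm2 w ≤ M ^ 2 * tnorm2 Z := by
    have h1 := hxl X (X + Z)
    have h2 : X + Z - X = Z := by funext a i j; simp
    rw [h2] at h1
    have h3 : vnorm2 w = Real.sqrt (vnorm2 w) ^ 2 := (Real.sq_sqrt hwnn).symm
    rw [h3]
    calc Real.sqrt (vnorm2 w) ^ 2 ≤ (M * Real.sqrt (tnorm2 Z)) ^ 2 := by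
          apply sq_le_sq' _ h1
          have h5 := Real.sqrt_nonneg (vnorm2 w)
          nlinarith [Real.sqrt_nonneg (tnorm2 Z)]
      _ = M ^ 2 * Real.sqrt (tnorm2 Z) ^ 2 := by ring
      _ = M ^ 2 * tnorm2 Z := by rw [Real.sq_sqrt hZnn]
  have hS : 2 * t * (lam / al x * vnorm2 v - kap / al x * ν ^ 2 * tnorm2 Z)
      ≤ 2 * t * (∑ γ, v γ * w γ) :=
    mul_le_mul_of_nonneg_left key2 (by linarith)
  have hSeq : 2 * t * (lam / al x * vnorm2 v - kap / al x * ν ^ 2 * tnorm2 Z)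
      = (2 / σ) * vnorm2 v - 2 * kap / (lam * σ) * ν ^ 2 * tnorm2 Z := by
    rw [ht]
    field_simp
  have hW : t ^ 2 * vnorm2 w ≤ (C / (lam * σ)) ^ 2 * (M ^ 2 * tnorm2 Z) := by
    have h1 : t ^ 2 ≤ (C / (lam * σ)) ^ 2 := by nlinarith
    calc t ^ 2 * vnorm2 w ≤ t ^ 2 * (M ^ 2 * tnorm2 Z) :=
          mul_le_mul_of_nonneg_left key3 (sq_nonneg _)
      _ ≤ (C / (lam * σ)) ^ 2 * (M ^ 2 * tnorm2 Z) := by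
          apply mul_le_mul_of_nonneg_right h1
          positivity
  have hβ : (2 / σ) * (kap / lam + (1 / (2 * σ)) * K) * ν ^ 2 * tnorm2 Z
      = 2 * kap / (lam * σ) * ν ^ 2 * tnorm2 Z + (C / (lam * σ)) ^ 2 * (M ^ 2 * tnorm2 Z) := by
    rw [hK]
    field_simp
  calc vnorm2 (fun γ => v γ - t * w γ)
      = vnorm2 v - 2 * t * (∑ γ, v γ * w γ) + t ^ 2 * vnorm2 w := key1
    _ ≤ (2 / σ) * (kap / lam + (1 / (2 * σ)) * K) * ν ^ 2 * tnorm2 Z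
        + (1 - 2 / σ) * vnorm2 v := by
        rw [hβ]; rw [hSeq] at hS; linarith
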